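/- The integral mean over the edge ξ=1 of the 5-node transition interpolant equals the integral mean over the same edge of the piecewise linear function that interpolates values u_2 at η=-1, u_5 at η=0, u_3 at η=1 and is linear on [-1,0] and [0,1]. Consequently, the jump of a function in the transition element space V_h across any 3-node edge has zero mean: ∫_e [w] ds = 0. -/

import Mathlib

open intervalIntegral MeasureTheory

lemma poly_int (a b c : ℝ) :
    (∫ x in (-1:ℝ)..1, (a + b * x + c * x ^ 2)) = 2 * a + 2 * c / 3 := by
  have h1 : IntervalIntegrable (fun x : ℝ => a + b * x) volume (-1) 1 := by
    apply Continuous.intervalIntegrable; fun_prop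
  have h2 : IntervalIntegrable (fun x : ℝ => c * x ^ 2) volume (-1) 1 := by
    apply Continuous.intervalIntegrable; fun_prop
  rw [intervalIntegral.integral_add h1 h2]
  have h3 : IntervalIntegrable (fun _ : ℝ => a) volume (-1) 1 :=
    intervalIntegrable_const
  have h4 : IntervalIntegrable (fun x : ℝ => b * x) volume (-1) 1 := by
    apply Continuous.intervalIntegrable; fun_prop
  rw [intervalIntegral.integral_add h3 h4, intervalIntegral.integral_const,
    intervalIntegral.integral_const_mul, intervalIntegral.integral_const_mul,
    integral_id]
  simp [integral_pow]
  ring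

lemma lin_int (a b p q : ℝ) :
    (∫ x in p..q, (a + b * x)) = a * (q - p) + b * (q ^ 2 - p ^ 2) / 2 := by
  have h3 : IntervalIntegrable (fun _ : ℝ => a) volume p q := intervalIntegrable_const
  have h4 : IntervalIntegrable (fun x : ℝ => b * x) volume p q := by
    apply Continuous.intervalIntegrable; fun_prop
  rw [intervalIntegral.integral_add h3 h4, intervalIntegral.integral_const,
    intervalIntegral.integral_const_mul, integral_id, smul_eq_mul]
  ring

/-- The integral mean over the edge `ξ = 1` of the 5-node transition interpolant equals the
integral mean of the piecewise linear interpolant of the nodal values `u2, u5, u3` at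
`η = -1, 0, 1`; consequently the jump across the 3-node edge has zero mean. -/
theorem transition_edge_mean_eq_piecewise_linear
    (u2 u3 u5 : ℝ)
    (vtr vpl : ℝ → ℝ)
    (hvtr : ∀ η, vtr η = u2 * ((1 - η) / 2 - (3/8) * (1 - η ^ 2))
        + u3 * ((1 + η) / 2 - (3/8) * (1 - η ^ 2))
        + u5 * ((3/4) * (1 - η ^ 2)))
    (hvpl : ∀ η, vpl η = if η ≤ 0 then u5 + (u5 - u2) * η else u5 + (u3 - u5) * η) :
    (1 / 2) * (∫ η in (-1 : ℝ)..1, vtr η) = (1 / 2) * (∫ η in (-1 : ℝ)..1, vpl η) ∧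
    (∫ η in (-1 : ℝ)..1, (vtr η - vpl η)) = 0 := by
  -- value of the transition integral
  have htr : (∫ η in (-1:ℝ)..1, vtr η) = (u2 + u3) / 2 + u5 := by
    have he : ∀ η : ℝ, vtr η =
        (u2 / 2 + u3 / 2 - 3/8 * u2 - 3/8 * u3 + 3/4 * u5)
        + ((u3 - u2) / 2) * η
        + (3/8 * u2 + 3/8 * u3 - 3/4 * u5) * η ^ 2 := by
      intro η; rw [hvtr η]; ring
    rw [intervalIntegral.integral_congr (fun η _ => he η), poly_int]
    ring
  -- vpl agrees with linear functions on each half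
  have hleft : ∀ η ∈ Set.uIcc (-1:ℝ) 0, vpl η = u5 + (u5 - u2) * η := by
    intro η hη
    rw [hvpl η]
    rw [Set.uIcc_of_le (by norm_num)] at hη
    simp [hη.2]
  have hright : ∀ η ∈ Set.uIcc (0:ℝ) 1, vpl η = u5 + (u3 - u5) * η := by
    intro η hη
    rw [hvpl η]
    rw [Set.uIcc_of_le (by norm_num)] at hη
    by_cases h : η ≤ 0
    · have : η = 0 := le_antisymm h hη.1
      simp [this]
    · simp [h]
  have hil : IntervalIntegrable vpl volume (-1) 0 := by
    apply IntervalIntegrable.congr (f := fun η => u5 + (u5 - u2) * η)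
    · exact fun η hη => (hleft η (Set.uIoc_subset_uIcc hη)).symm
    · apply Continuous.intervalIntegrable; fun_prop
  have hir : IntervalIntegrable vpl volume 0 1 := by
    apply IntervalIntegrable.congr (f := fun η => u5 + (u3 - u5) * η)
    · exact fun η hη => (hright η (Set.uIoc_subset_uIcc hη)).symm
    · apply Continuous.intervalIntegrable; fun_prop
  have hpl : (∫ η in (-1:ℝ)..1, vpl η) = (u2 + u3) / 2 + u5 := by
    rw [← intervalIntegral.integral_add_adjacent_intervals hil hir,
      intervalIntegral.integral_congr hleft, intervalIntegral.integral_congr hright,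
      lin_int, lin_int]
    ring
  have hitr : IntervalIntegrable vtr volume (-1) 1 := by
    apply Continuous.intervalIntegrable
    have : vtr = fun η => u2 * ((1 - η) / 2 - (3/8) * (1 - η ^ 2))
        + u3 * ((1 + η) / 2 - (3/8) * (1 - η ^ 2))
        + u5 * ((3/4) * (1 - η ^ 2)) := funext hvtr
    rw [this]; fun_prop
  constructor
  · rw [htr, hpl]
  · rw [intervalIntegral.integral_sub hitr (hil.trans hir), htr, hpl]
    ring
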